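/- Let g_1, …, g_i ∈ F_{q^m} be linearly independent over F_q and r_1, …, r_i ∈ F_{q^m}. Let P, K, N, D be q-linearized polynomials over F_{q^m} such that: (a) P(g_j) = K(r_j) and N(g_j) = D(r_j) for all j ≤ i − 1; (b) for every pair of q-linearized polynomials (f, h) with f(g_j) = h(r_j) for all j ≤ i − 1, there exist q-linearized polynomials a, b with f = a ∘ P + b ∘ N and h = a ∘ K + b ∘ D. Set Δ = N(g_i) − D(r_i) and Γ = P(g_i) − K(r_i), and assume Δ ≠ 0. Define P''(X) = Δ·P(X) − Γ·N(X), K''(X) = Δ·K(X) − Γ·D(X), N''(X) = N(X)^q − Δ^{q−1} N(X), D''(X) = D(X)^q − Δ^{q−1} D(X). Then P''(g_j) = K''(r_j) and N''(g_j) = D''(r_j) for all j ≤ i, and for every pair of q-linearized polynomials (f, h) with f(g_j) = h(r_j) for all j ≤ i, there exist q-linearized polynomials a, b with f = a ∘ P'' + b ∘ N'' and h = a ∘ K'' + b ∘ D''. -/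

import Mathlib

open Polynomial

/-- `f` is a `q`-linearized polynomial: every monomial with nonzero coefficient
has exponent a power of `q`, i.e. `f = Σ aᵢ X^(q^i)`. -/
def IsqLinearized (q : ℕ) {L : Type*} [Field L] (f : L[X]) : Prop :=
  ∀ i : ℕ, f.coeff i ≠ 0 → ∃ j : ℕ, i = q ^ j

section Helpers

variable {L : Type*} [Field L] {q : ℕ}

lemma qlin_zero : IsqLinearized q (0 : L[X]) := by
  intro i hi; simp at hi

lemma qlin_add {f g : L[X]} (hf : IsqLinearized q f) (hg : IsqLinearized q g) :
    IsqLinearized q (f + g) := by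
  intro i hi
  have : f.coeff i ≠ 0 ∨ g.coeff i ≠ 0 := by
    by_contra h
    push_neg at h
    simp [coeff_add, h.1, h.2] at hi
  exact this.elim (hf i) (hg i)

lemma qlin_neg {f : L[X]} (hf : IsqLinearized q f) : IsqLinearized q (-f) := by
  intro i hi
  rw [coeff_neg, neg_ne_zero] at hi
  exact hf i hi

lemma qlin_sub {f g : L[X]} (hf : IsqLinearized q f) (hg : IsqLinearized q g) :
    IsqLinearized q (f - g) := by
  rw [sub_eq_add_neg]; exact qlin_add hf (qlin_neg hg)

lemma qlin_mono (c : L) (j : ℕ) : IsqLinearized q (C c * X ^ q ^ j) := by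
  intro i hi
  refine ⟨j, ?_⟩
  by_contra h
  simp [coeff_C_mul, coeff_X_pow, h] at hi

lemma comp_C_mul_X_coeff (a : L[X]) (c : L) (i : ℕ) :
    (a.comp (C c * X)).coeff i = a.coeff i * c ^ i := by
  induction a using Polynomial.induction_on' with
  | add p r hp hr => simp [add_comp, hp, hr, add_mul]
  | monomial k t =>
      rw [monomial_comp, mul_pow, ← C_pow, ← mul_assoc, ← C_mul]
      rw [coeff_C_mul, coeff_X_pow, coeff_monomial]
      by_cases h : k = i
      · subst h; simp
      · simp [h, Ne.symm h]

lemma qlin_comp_C_mul_X {a : L[X]} (ha : IsqLinearized q a) (c : L) :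
    IsqLinearized q (a.comp (C c * X)) := by
  intro i hi
  rw [_root_.comp_C_mul_X_coeff] at hi
  exact ha i fun h => hi (by simp [h])

variable {p k : ℕ}

lemma freshman_poly (hp : p.Prime) [CharP L p] (hqpk : q = p ^ k)
    (u v : L[X]) (e : ℕ) : (u - v) ^ q ^ e = u ^ q ^ e - v ^ q ^ e := by
  haveI : Fact p.Prime := ⟨hp⟩
  subst hqpk
  have hE : (p ^ k) ^ e = p ^ (k * e) := (pow_mul p k e).symm
  rw [hE, sub_pow_char_pow]

lemma freshman_scalar (hp : p.Prime) [CharP L p] (hqpk : q = p ^ k)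
    (x y : L) : (x + y) ^ q = x ^ q + y ^ q := by
  haveI : Fact p.Prime := ⟨hp⟩
  subst hqpk
  rw [add_pow_char_pow]

lemma qlin_comp_add (hp : p.Prime) [CharP L p] (hqpk : q = p ^ k)
    {a : L[X]} (ha : IsqLinearized q a) (u v : L[X]) :
    a.comp (u + v) = a.comp u + a.comp v := by
  rw [comp_eq_sum_left, comp_eq_sum_left, comp_eq_sum_left, sum_def, sum_def, sum_def,
    ← Finset.sum_add_distrib]
  refine Finset.sum_congr rfl fun i hi => ?_
  obtain ⟨j, rfl⟩ := ha i (mem_support_iff.mp hi)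
  have : (u + v) ^ q ^ j = u ^ q ^ j + v ^ q ^ j := by
    have := freshman_poly hp hqpk (u + v) v j
    rw [add_sub_cancel_right] at this
    rw [this]; ring
  rw [this, mul_add]

lemma qlin_comp_sub (hp : p.Prime) [CharP L p] (hqpk : q = p ^ k)
    {a : L[X]} (ha : IsqLinearized q a) (u v : L[X]) :
    a.comp (u - v) = a.comp u - a.comp v := by
  have h := qlin_comp_add hp hqpk ha (u - v) v
  rw [sub_add_cancel] at h
  rw [h]; ring

lemma qlin_eval_add (hp : p.Prime) [CharP L p] (hqpk : q = p ^ k)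
    {a : L[X]} (ha : IsqLinearized q a) (x y : L) :
    a.eval (x + y) = a.eval x + a.eval y := by
  have h := qlin_comp_add hp hqpk ha (C x) (C y)
  rw [← C_add, comp_C, comp_C, comp_C, ← C_add] at h
  exact C_inj.mp h

lemma qlin_eval_sub (hp : p.Prime) [CharP L p] (hqpk : q = p ^ k)
    {a : L[X]} (ha : IsqLinearized q a) (x y : L) :
    a.eval (x - y) = a.eval x - a.eval y := by
  have h := qlin_eval_add hp hqpk ha (x - y) y
  rw [sub_add_cancel] at h
  rw [h]; ring

lemma qlin_eval_zero (hq1 : 1 < q) {a : L[X]} (ha : IsqLinearized q a) :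
    a.eval 0 = 0 := by
  rw [← coeff_zero_eq_eval_zero]
  by_contra h
  obtain ⟨j, hj⟩ := ha 0 h
  have : 0 < q ^ j := Nat.pow_pos (by omega)
  omega

lemma qlin_coeff_zero (hq1 : 1 < q) {a : L[X]} (ha : IsqLinearized q a) :
    a.coeff 0 = 0 := by
  rw [coeff_zero_eq_eval_zero]; exact qlin_eval_zero hq1 ha

/-- Symbolic (left) division of a `q`-linearized polynomial by
`φ = X^q - C (Δ^(q-1)) * X`, with remainder of `q`-degree zero. -/
lemma qlin_div (hp : p.Prime) [CharP L p] (hqpk : q = p ^ k) (hq1 : 1 < q) (Δ : L) :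
    ∀ d (c : L[X]), c.natDegree ≤ d → IsqLinearized q c →
      ∃ b' ρ, IsqLinearized q b' ∧
        c = b'.comp (X ^ q - C (Δ ^ (q - 1)) * X) + C ρ * X := by
  intro d
  induction d using Nat.strong_induction_on with
  | _ d ih =>
    intro c hdeg hc
    set φ : L[X] := X ^ q - C (Δ ^ (q - 1)) * X with hφdef
    by_cases h1 : c.natDegree ≤ 1
    · refine ⟨0, c.coeff 1, qlin_zero, ?_⟩
      rw [zero_comp, zero_add]
      conv_lhs => rw [eq_X_add_C_of_natDegree_le_one h1]
      rw [qlin_coeff_zero hq1 hc]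
      simp
    · push_neg at h1
      have hc0 : c ≠ 0 := by rintro rfl; simp at h1
      have hlc : c.leadingCoeff ≠ 0 := leadingCoeff_ne_zero.mpr hc0
      obtain ⟨j, hj⟩ := hc c.natDegree hlc
      have hj0 : j ≠ 0 := by rintro rfl; simp at hj; omega
      obtain ⟨e, rfl⟩ : ∃ e, j = e + 1 := ⟨j - 1, by omega⟩
      set lc := c.leadingCoeff with hlcdef
      have hφe : φ ^ q ^ e =
          X ^ q ^ (e + 1) - C ((Δ ^ (q - 1)) ^ q ^ e) * X ^ q ^ e := by
        rw [hφdef, freshman_poly hp hqpk, ← pow_mul, mul_pow, ← C_pow, ← pow_mul,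
          ← pow_succ']
      set t : L[X] := C lc * X ^ q ^ e with htdef
      have ht : t.comp φ =
          C lc * X ^ q ^ (e + 1) - C (lc * (Δ ^ (q - 1)) ^ q ^ e) * X ^ q ^ e := by
        rw [htdef, mul_comp, C_comp, X_pow_comp, hφe, mul_sub, C_mul, mul_assoc]
      have hlt : (q : ℕ) ^ e < q ^ (e + 1) := Nat.pow_lt_pow_right hq1 (by omega)
      have hdt : (t.comp φ).degree = ((q ^ (e + 1) : ℕ) : WithBot ℕ) := by
        rw [ht, degree_sub_eq_left_of_degree_lt, degree_C_mul_X_pow _ hlc]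
        calc (C (lc * (Δ ^ (q - 1)) ^ q ^ e) * X ^ q ^ e).degree
            ≤ ((q ^ e : ℕ) : WithBot ℕ) := degree_C_mul_X_pow_le _ _
          _ < ((q ^ (e + 1) : ℕ) : WithBot ℕ) := by exact_mod_cast hlt
          _ = (C lc * X ^ q ^ (e + 1)).degree := (degree_C_mul_X_pow _ hlc).symm
      have hdc : c.degree = ((q ^ (e + 1) : ℕ) : WithBot ℕ) := by
        rw [degree_eq_natDegree hc0, hj]
      have hlct : (t.comp φ).leadingCoeff = lc := by
        have hnd : (t.comp φ).natDegree = q ^ (e + 1) :=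
          natDegree_eq_of_degree_eq_some hdt
        rw [leadingCoeff, hnd, ht, coeff_sub, coeff_C_mul, coeff_C_mul, coeff_X_pow,
          coeff_X_pow, if_pos rfl, if_neg (Ne.symm (Nat.ne_of_lt hlt)), mul_one,
          mul_zero, sub_zero]
      have hsub : (c - t.comp φ).degree < c.degree :=
        degree_sub_lt (by rw [hdc, hdt]) hc0 (by rw [hlct])
      have hc'lin : IsqLinearized q (c - t.comp φ) := by
        refine qlin_sub hc ?_
        rw [ht]
        exact qlin_sub (qlin_mono _ _) (qlin_mono _ _)
      have hltd : (c - t.comp φ).natDegree < d := by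
        rcases eq_or_ne (c - t.comp φ) 0 with h0 | h0
        · rw [h0, natDegree_zero]; omega
        · have := natDegree_lt_natDegree h0 hsub
          omega
      obtain ⟨b0, ρ, hb0, hrep⟩ := ih _ hltd (c - t.comp φ) le_rfl hc'lin
      refine ⟨b0 + t, ρ, qlin_add hb0 (qlin_mono _ _), ?_⟩
      rw [add_comp]
      have : c = (c - t.comp φ) + t.comp φ := by ring
      rw [this, hrep]; ring

end Helpers

/-- The update step preserves membership and the basis property (case `Δ ≠ 0`): the
updated rows `(P'', K'')` and `(N'', D'')` interpolate all `i` data points (here the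
points are indexed by `Fin (n + 1)` with `i = n + 1`), and every pair of `q`-linearized
polynomials interpolating all `i` data points is a left combination of them. -/
theorem update_step_spans_delta_ne_zero
    (q m : ℕ) (hq : IsPrimePow q) (hm : 0 < m)
    (F L : Type*) [Field F] [Field L] [Fintype F] [Fintype L] [Algebra F L]
    (hcardF : Fintype.card F = q) (hcardL : Fintype.card L = q ^ m)
    (n : ℕ) (g r : Fin (n + 1) → L) (hg : LinearIndependent F g)
    (P Kp N D : L[X])
    (hP : IsqLinearized q P) (hKp : IsqLinearized q Kp)
    (hN : IsqLinearized q N) (hD : IsqLinearized q D)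
    (hPK : ∀ j : Fin n, P.eval (g j.castSucc) = Kp.eval (r j.castSucc))
    (hND : ∀ j : Fin n, N.eval (g j.castSucc) = D.eval (r j.castSucc))
    (hbasis : ∀ f h : L[X], IsqLinearized q f → IsqLinearized q h →
      (∀ j : Fin n, f.eval (g j.castSucc) = h.eval (r j.castSucc)) →
      ∃ a b : L[X], IsqLinearized q a ∧ IsqLinearized q b ∧
        f = a.comp P + b.comp N ∧ h = a.comp Kp + b.comp D)
    (Δ Γ : L)
    (hΔ : Δ = N.eval (g (Fin.last n)) - D.eval (r (Fin.last n)))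
    (hΓ : Γ = P.eval (g (Fin.last n)) - Kp.eval (r (Fin.last n)))
    (hΔ0 : Δ ≠ 0)
    (P'' K'' N'' D'' : L[X])
    (hP'' : P'' = C Δ * P - C Γ * N)
    (hK'' : K'' = C Δ * Kp - C Γ * D)
    (hN'' : N'' = N ^ q - C (Δ ^ (q - 1)) * N)
    (hD'' : D'' = D ^ q - C (Δ ^ (q - 1)) * D) :
    (∀ j : Fin (n + 1), P''.eval (g j) = K''.eval (r j) ∧ N''.eval (g j) = D''.eval (r j)) ∧
      ∀ f h : L[X], IsqLinearized q f → IsqLinearized q h →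
        (∀ j : Fin (n + 1), f.eval (g j) = h.eval (r j)) →
        ∃ a b : L[X], IsqLinearized q a ∧ IsqLinearized q b ∧
          f = a.comp P'' + b.comp N'' ∧ h = a.comp K'' + b.comp D'' := by
  -- set up the characteristic
  classical
  set p := ringChar F with hpdef
  have hpprime : p.Prime := CharP.char_is_prime F p
  obtain ⟨k, -, hcard⟩ := FiniteField.card F p
  have hqpk : q = p ^ (k : ℕ) := by rw [← hcardF, hcard]
  haveI : CharP L p :=
    charP_of_injective_algebraMap (algebraMap F L).injective p
  have hq1 : 1 < q := by rw [← hcardF]; exact Fintype.one_lt_card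
  have hΔpow : Δ ^ (q - 1) * Δ = Δ ^ q := by
    rw [← pow_succ]
    congr 1
    omega
  constructor
  · -- membership part
    intro j
    induction j using Fin.lastCases with
    | last =>
        constructor
        · rw [hP'', hK'']
          simp only [eval_sub, eval_mul, eval_C]
          subst hΔ hΓ
          ring
        · rw [hN'', hD'']
          simp only [eval_sub, eval_mul, eval_C, eval_pow]
          have hNg : N.eval (g (Fin.last n)) = D.eval (r (Fin.last n)) + Δ := by
            rw [hΔ]; ring
          rw [hNg, freshman_scalar hpprime hqpk]
          linear_combination -hΔpow
    | cast j =>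
        constructor
        · rw [hP'', hK'']
          simp only [eval_sub, eval_mul, eval_C]
          rw [hPK j, hND j]
        · rw [hN'', hD'']
          simp only [eval_sub, eval_mul, eval_C, eval_pow]
          rw [hND j]
  · -- spanning part
    intro f h hf hh hinterp
    obtain ⟨a, b, ha, hb, hfab, hhab⟩ :=
      hbasis f h hf hh (fun j => hinterp j.castSucc)
    set a' : L[X] := a.comp (C Δ⁻¹ * X) with ha'def
    have ha' : IsqLinearized q a' := qlin_comp_C_mul_X ha _
    have haa : a'.comp (C Δ * X) = a := by
      have hXX : (C Δ⁻¹ * X).comp (C Δ * X) = X := by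
        rw [mul_comp, C_comp, X_comp, ← mul_assoc, ← C_mul,
          inv_mul_cancel₀ hΔ0, C_1, one_mul]
      rw [ha'def, comp_assoc, hXX, comp_X]
    set B : L[X] := a'.comp (C Γ * X) with hBdef
    have hBlin : IsqLinearized q B := qlin_comp_C_mul_X ha' _
    set c : L[X] := b + B with hcdef
    have hclin : IsqLinearized q c := qlin_add hb hBlin
    set φ : L[X] := X ^ q - C (Δ ^ (q - 1)) * X with hφdef
    obtain ⟨b', ρ, hb', hrep⟩ :=
      qlin_div hpprime hqpk hq1 Δ c.natDegree c le_rfl hclin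
    rw [← hφdef] at hrep
    -- show ρ = 0
    have hφΔ : φ.eval Δ = 0 := by
      rw [hφdef]
      simp only [eval_sub, eval_mul, eval_pow, eval_C, eval_X]
      rw [hΔpow]; ring
    -- the key evaluation relation at the last point
    have hkey : a.eval Γ + b.eval Δ = 0 := by
      have hlast := hinterp (Fin.last n)
      rw [hfab, hhab] at hlast
      simp only [eval_add, eval_comp] at hlast
      have h1 : a.eval Γ =
          a.eval (P.eval (g (Fin.last n))) - a.eval (Kp.eval (r (Fin.last n))) := by
        rw [hΓ, qlin_eval_sub hpprime hqpk ha]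
      have h2 : b.eval Δ =
          b.eval (N.eval (g (Fin.last n))) - b.eval (D.eval (r (Fin.last n))) := by
        rw [hΔ, qlin_eval_sub hpprime hqpk hb]
      rw [h1, h2]
      linear_combination hlast
    have hcΔ : c.eval Δ = 0 := by
      have hBΔ : B.eval Δ = a'.eval (Γ * Δ) := by
        rw [hBdef, eval_comp]
        simp
      have haΓ : a.eval Γ = a'.eval (Δ * Γ) := by
        rw [← haa, eval_comp]
        simp
      rw [hcdef, eval_add, hBΔ, mul_comm Γ Δ, ← haΓ]
      linear_combination hkey
    have hρ0 : ρ = 0 := by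
      have h0 : c.eval Δ = b'.eval (φ.eval Δ) + ρ * Δ := by
        rw [hrep, eval_add, eval_mul, eval_C, eval_X, eval_comp]
      rw [hcΔ, hφΔ, qlin_eval_zero hq1 hb', zero_add] at h0
      exact (mul_eq_zero.mp h0.symm).resolve_right hΔ0
    have hcφ : c = b'.comp φ := by
      rw [hrep, hρ0]; simp
    -- assemble the final identities
    have e1 : ∀ w : L[X], a'.comp (C Δ * w) = a.comp w := by
      intro w
      rw [ha'def, comp_assoc]
      congr 1
      rw [mul_comp, C_comp, X_comp, ← mul_assoc, ← C_mul, inv_mul_cancel₀ hΔ0,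
        C_1, one_mul]
    have e2 : ∀ w : L[X], a'.comp (C Γ * w) = B.comp w := by
      intro w
      have hinner : (C Γ * X).comp w = C Γ * w := by
        rw [mul_comp, C_comp, X_comp]
      have hassoc := comp_assoc a' (C Γ * X) w
      rw [hinner] at hassoc
      rw [hBdef]
      exact hassoc.symm
    have hφN : φ.comp N = N'' := by
      rw [hφdef, hN'', sub_comp, X_pow_comp, mul_comp, C_comp, X_comp]
    have hφD : φ.comp D = D'' := by
      rw [hφdef, hD'', sub_comp, X_pow_comp, mul_comp, C_comp, X_comp]
    refine ⟨a', b', ha', hb', ?_, ?_⟩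
    · rw [hP'', qlin_comp_sub hpprime hqpk ha', e1, e2, ← hφN, ← comp_assoc, ← hcφ,
        hcdef, add_comp, hfab]
      ring
    · rw [hK'', qlin_comp_sub hpprime hqpk ha', e1, e2, ← hφD, ← comp_assoc, ← hcφ,
        hcdef, add_comp, hhab]
      ring
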